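/- (Terminal error bound along a finite-horizon optimal trajectory, eq. (25) of Theorem 1's proof.) Under Condition 1 and Assumption SA1, let α ∈ (0,1) satisfy αP̄ ⪯ Q_i for all i ∈ 𝕄 and α₀ > 0 satisfy α₀(P̄ − P̲) ⪯ Q_i for all i ∈ 𝕄. Let d ≥ 1, x_0 = x ∈ ℝⁿ, and for k = 0,…,d−2 let (u_k,i_k) ∈ H*_{d−k}(x_k) and x_{k+1} := A_{i_k}x_k + B_{i_k}u_k. Then min over i ∈ 𝕄 of x_{d−1}ᵀQ_ix_{d−1} ≤ (1−α)^{d−1}·V*_d(x), and consequently V*(x_{d−1}) − x_{d−1}ᵀP̲x_{d−1} ≤ ((1−α)^{d−1}/α₀)·V*_d(x). -/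

import Mathlib

open Matrix Filter
open scoped ENNReal

/-- Data of a switched linear-quadratic problem with `M` modes,
state dimension `n` and continuous-input dimension `m`. -/
structure SwitchedLQR (n m M : ℕ) where
  A : Fin M → Matrix (Fin n) (Fin n) ℝ
  B : Fin M → Matrix (Fin n) (Fin m) ℝ
  Q : Fin M → Matrix (Fin n) (Fin n) ℝ
  R : Fin M → Matrix (Fin m) (Fin m) ℝ

namespace SwitchedLQR

variable {n m M : ℕ}

/-- Stage cost `ℓ(x,u,i) = xᵀQᵢx + uᵀRᵢu`. -/
def ell (S : SwitchedLQR n m M) (x : Fin n → ℝ) (u : Fin m → ℝ) (i : Fin M) : ℝ :=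
  x ⬝ᵥ ((S.Q i) *ᵥ x) + u ⬝ᵥ ((S.R i) *ᵥ u)

/-- Riccati operator `𝓡ᵢ(P)`. -/
noncomputable def Ric (S : SwitchedLQR n m M) (i : Fin M)
    (P : Matrix (Fin n) (Fin n) ℝ) : Matrix (Fin n) (Fin n) ℝ :=
  S.Q i + (S.A i)ᵀ * P * S.A i -
    (S.A i)ᵀ * P * S.B i * (S.R i + (S.B i)ᵀ * P * S.B i)⁻¹ * ((S.B i)ᵀ * P * S.A i)

/-- `P_𝐢 = 𝓡_{i₀}(𝓡_{i₁}(⋯𝓡_{i_{d-1}}(P̲)⋯))` for a finite mode sequence `𝐢`. -/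
noncomputable def Pseq (S : SwitchedLQR n m M) (Pund : Matrix (Fin n) (Fin n) ℝ)
    (l : List (Fin M)) : Matrix (Fin n) (Fin n) ℝ :=
  l.foldr S.Ric Pund

/-- Solution `φ(k,x,u,i)` of the switched linear system. -/
def phi (S : SwitchedLQR n m M) (x : Fin n → ℝ) (u : ℕ → Fin m → ℝ) (is : ℕ → Fin M) :
    ℕ → Fin n → ℝ
  | 0 => x
  | k + 1 => S.A (is k) *ᵥ (phi S x u is k) + S.B (is k) *ᵥ (u k)

/-- Finite-horizon cost `J_d` with terminal cost matrix `P̲`. -/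
noncomputable def Jd (S : SwitchedLQR n m M) (Pund : Matrix (Fin n) (Fin n) ℝ) (d : ℕ)
    (x : Fin n → ℝ) (u : ℕ → Fin m → ℝ) (is : ℕ → Fin M) : ℝ :=
  (∑ k ∈ Finset.range d, S.ell (S.phi x u is k) (u k) (is k)) +
    (S.phi x u is d) ⬝ᵥ (Pund *ᵥ (S.phi x u is d))

/-- Infinite-horizon cost `J(x,u,i) ∈ [0,∞]`. -/
noncomputable def Jinf (S : SwitchedLQR n m M) (x : Fin n → ℝ) (u : ℕ → Fin m → ℝ)
    (is : ℕ → Fin M) : ℝ≥0∞ :=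
  ∑' k : ℕ, ENNReal.ofReal (S.ell (S.phi x u is k) (u k) (is k))

/-- Optimal value function `V*(x)`. -/
noncomputable def Vstar (S : SwitchedLQR n m M) (x : Fin n → ℝ) : ℝ≥0∞ :=
  ⨅ (u : ℕ → Fin m → ℝ) (is : ℕ → Fin M), S.Jinf x u is

/-- `V*_d(x)`: minimum over length-`d` mode sequences `𝐢` of `xᵀP_𝐢x`. -/
noncomputable def Vd (S : SwitchedLQR n m M) (Pund : Matrix (Fin n) (Fin n) ℝ) (d : ℕ)
    (x : Fin n → ℝ) : ℝ :=
  sInf {r : ℝ | ∃ l : List (Fin M), l.length = d ∧ r = x ⬝ᵥ ((S.Pseq Pund l) *ᵥ x)}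

/-- Condition 1: the LMI block matrix is positive semi-definite for every mode. -/
def Cond1 (S : SwitchedLQR n m M) (Pund : Matrix (Fin n) (Fin n) ℝ) : Prop :=
  ∀ i : Fin M,
    (Matrix.fromBlocks
      ((S.A i)ᵀ * Pund * S.A i - Pund + S.Q i) ((S.A i)ᵀ * Pund * S.B i)
      ((S.B i)ᵀ * Pund * S.A i) (S.R i + (S.B i)ᵀ * Pund * S.B i)).PosSemidef

/-- Assumption SA1. -/
def SA1 (S : SwitchedLQR n m M) (Pbar : Matrix (Fin n) (Fin n) ℝ) : Prop :=
  Pbar.PosDef ∧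
    ∀ x : Fin n → ℝ, ∃ (u : ℕ → Fin m → ℝ) (is : ℕ → Fin M),
      S.Jinf x u is = S.Vstar x ∧ S.Vstar x ≤ ENNReal.ofReal (x ⬝ᵥ (Pbar *ᵥ x))

/-- `H*_d(x)`. -/
noncomputable def HStar (S : SwitchedLQR n m M) (Pund : Matrix (Fin n) (Fin n) ℝ) (d : ℕ)
    (x : Fin n → ℝ) : Set ((Fin m → ℝ) × Fin M) :=
  {p | S.Vd Pund d x =
        S.ell x p.1 p.2 + S.Vd Pund (d - 1) (S.A p.2 *ᵥ x + S.B p.2 *ᵥ p.1)}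

/-- `F_d(x)`. -/
noncomputable def Fd (S : SwitchedLQR n m M) (Pund : Matrix (Fin n) (Fin n) ℝ) (d : ℕ)
    (x : Fin n → ℝ) : Set (Fin n → ℝ) :=
  {y | ∃ p ∈ S.HStar Pund d x, y = S.A p.2 *ᵥ x + S.B p.2 *ᵥ p.1}

end SwitchedLQR

section helperlemmas
open Matrix
variable {ι κ ρ σ : Type*} [Fintype ι] [Fintype κ] [Fintype ρ] [Fintype σ]

lemma psd_quad_nonneg {P : Matrix ι ι ℝ} (hP : P.PosSemidef) (x : ι → ℝ) :
    0 ≤ x ⬝ᵥ (P *ᵥ x) := by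
  have := hP.dotProduct_mulVec_nonneg x
  rwa [star_trivial] at this

lemma mulVec_dotProduct_eq (K : Matrix ι κ ℝ) (x : κ → ℝ) (y : ι → ℝ) :
    (K *ᵥ x) ⬝ᵥ y = x ⬝ᵥ (Kᵀ *ᵥ y) := by
  rw [dotProduct_mulVec, vecMul_transpose]

lemma dot3 (Mm : Matrix ι κ ℝ) (P : Matrix ι ρ ℝ) (N : Matrix ρ σ ℝ)
    (x : κ → ℝ) (u : σ → ℝ) :
    x ⬝ᵥ ((Mmᵀ * P * N) *ᵥ u) = (Mm *ᵥ x) ⬝ᵥ (P *ᵥ (N *ᵥ u)) := by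
  rw [← mulVec_mulVec, ← mulVec_mulVec, dotProduct_mulVec, vecMul_transpose]

lemma expand_quad {n m : ℕ} (A : Matrix (Fin n) (Fin n) ℝ) (B : Matrix (Fin n) (Fin m) ℝ)
    (P : Matrix (Fin n) (Fin n) ℝ) (x : Fin n → ℝ) (u : Fin m → ℝ) :
    (A *ᵥ x + B *ᵥ u) ⬝ᵥ (P *ᵥ (A *ᵥ x + B *ᵥ u))
      = x ⬝ᵥ ((Aᵀ*P*A) *ᵥ x) + x ⬝ᵥ ((Aᵀ*P*B) *ᵥ u)
        + u ⬝ᵥ ((Bᵀ*P*A) *ᵥ x) + u ⬝ᵥ ((Bᵀ*P*B) *ᵥ u) := by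
  simp only [Matrix.mulVec_add, dotProduct_add, add_dotProduct]
  rw [← dot3 A P A x x, ← dot3 A P B x u, ← dot3 B P A u x, ← dot3 B P B u u]
  ring
end helperlemmas

section cos
open Matrix
variable {n m : ℕ}
variable (A : Matrix (Fin n) (Fin n) ℝ) (B : Matrix (Fin n) (Fin m) ℝ)
    (Q : Matrix (Fin n) (Fin n) ℝ) (R : Matrix (Fin m) (Fin m) ℝ)
    (P : Matrix (Fin n) (Fin n) ℝ)

lemma S_posdef (hP : P.PosSemidef) (hR : R.PosDef) : (R + Bᵀ * P * B).PosDef := by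
  have h1 : (Bᵀ * P * B).PosSemidef := by
    have := hP.conjTranspose_mul_mul_same B
    rwa [conjTranspose_eq_transpose_of_trivial] at this
  exact hR.add_posSemidef h1

lemma cos_identity (hP : P.PosSemidef) (hR : R.PosDef) (x : Fin n → ℝ) (u : Fin m → ℝ) :
    x ⬝ᵥ ((Q + Aᵀ*P*A - Aᵀ*P*B*(R + Bᵀ*P*B)⁻¹*(Bᵀ*P*A)) *ᵥ x)
      + (u + ((R + Bᵀ*P*B)⁻¹*(Bᵀ*P*A)) *ᵥ x) ⬝ᵥ ((R + Bᵀ*P*B) *ᵥ (u + ((R + Bᵀ*P*B)⁻¹*(Bᵀ*P*A)) *ᵥ x))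
      = x ⬝ᵥ (Q *ᵥ x) + u ⬝ᵥ (R *ᵥ u) + (A *ᵥ x + B *ᵥ u) ⬝ᵥ (P *ᵥ (A *ᵥ x + B *ᵥ u)) := by
  set S : Matrix (Fin m) (Fin m) ℝ := R + Bᵀ*P*B with hSdef
  have hS : S.PosDef := S_posdef B R P hP hR
  have hdet : IsUnit S.det := isUnit_iff_isUnit_det _ |>.1 hS.isUnit
  have hSsymm : Sᵀ = S := by
    have := hS.isHermitian
    rwa [IsHermitian, conjTranspose_eq_transpose_of_trivial] at this
  have hPsymm : Pᵀ = P := by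
    have := hP.isHermitian
    rwa [IsHermitian, conjTranspose_eq_transpose_of_trivial] at this
  set G : Matrix (Fin m) (Fin n) ℝ := Bᵀ*P*A with hGdef
  set w : Fin m → ℝ := (S⁻¹ * G) *ᵥ x with hwdef
  have hSw : S *ᵥ w = G *ᵥ x := by
    rw [hwdef, mulVec_mulVec, ← Matrix.mul_assoc, Matrix.mul_nonsing_inv _ hdet, Matrix.one_mul]
  have hGT : Gᵀ = Aᵀ*P*B := by
    simp [hGdef, Matrix.transpose_mul, hPsymm, Matrix.mul_assoc]
  have e1 : x ⬝ᵥ ((Q + Aᵀ*P*A - Aᵀ*P*B*S⁻¹*G) *ᵥ x)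
      = x ⬝ᵥ (Q *ᵥ x) + x ⬝ᵥ ((Aᵀ*P*A) *ᵥ x) - x ⬝ᵥ ((Aᵀ*P*B*S⁻¹*G) *ᵥ x) := by
    rw [Matrix.sub_mulVec, Matrix.add_mulVec, dotProduct_sub, dotProduct_add]
  have e2 : (u + w) ⬝ᵥ (S *ᵥ (u + w))
      = u ⬝ᵥ (S *ᵥ u) + u ⬝ᵥ (S *ᵥ w) + w ⬝ᵥ (S *ᵥ u) + w ⬝ᵥ (S *ᵥ w) := by
    simp only [Matrix.mulVec_add, dotProduct_add, add_dotProduct]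
    ring
  have e3 : u ⬝ᵥ (S *ᵥ u) = u ⬝ᵥ (R *ᵥ u) + u ⬝ᵥ ((Bᵀ*P*B) *ᵥ u) := by
    rw [hSdef, Matrix.add_mulVec, dotProduct_add]
  have e4 : u ⬝ᵥ (S *ᵥ w) = u ⬝ᵥ (G *ᵥ x) := by rw [hSw]
  have e5 : w ⬝ᵥ (S *ᵥ u) = x ⬝ᵥ ((Aᵀ*P*B) *ᵥ u) := by
    rw [dotProduct_mulVec, ← mulVec_transpose, hSsymm, hSw, mulVec_dotProduct_eq, hGT]
  have e6 : w ⬝ᵥ (S *ᵥ w) = x ⬝ᵥ ((Aᵀ*P*B*S⁻¹*G) *ᵥ x) := by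
    rw [hSw, hwdef, mulVec_dotProduct_eq]
    rw [mulVec_mulVec]
    congr 1
    rw [Matrix.transpose_mul, hGT, Matrix.transpose_nonsing_inv, hSsymm, Matrix.mul_assoc]
  have e7 : (A *ᵥ x + B *ᵥ u) ⬝ᵥ (P *ᵥ (A *ᵥ x + B *ᵥ u))
      = x ⬝ᵥ ((Aᵀ*P*A) *ᵥ x) + x ⬝ᵥ ((Aᵀ*P*B) *ᵥ u) + u ⬝ᵥ (G *ᵥ x) + u ⬝ᵥ ((Bᵀ*P*B) *ᵥ u) := by
    rw [expand_quad, hGdef]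
  rw [e1, e2, e3, e4, e5, e6, e7]
  ring
end cos
namespace SwitchedLQR
open Matrix
variable {n m M : ℕ} (S : SwitchedLQR n m M)

/-- key pointwise inequality for the Riccati operator. -/
lemma ric_key (hRi : ∀ i, (S.R i).PosDef) {P : Matrix (Fin n) (Fin n) ℝ} (hP : P.PosSemidef)
    (i : Fin M) (x : Fin n → ℝ) (u : Fin m → ℝ) :
    x ⬝ᵥ (S.Ric i P *ᵥ x) ≤ S.ell x u i
      + (S.A i *ᵥ x + S.B i *ᵥ u) ⬝ᵥ (P *ᵥ (S.A i *ᵥ x + S.B i *ᵥ u)) := by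
  have h := cos_identity (S.A i) (S.B i) (S.Q i) (S.R i) P hP (hRi i) x u
  have hS : (S.R i + (S.B i)ᵀ * P * S.B i).PosDef := S_posdef (S.B i) (S.R i) P hP (hRi i)
  have hnn : 0 ≤ (u + ((S.R i + (S.B i)ᵀ*P*(S.B i))⁻¹*((S.B i)ᵀ*P*(S.A i))) *ᵥ x) ⬝ᵥ
      ((S.R i + (S.B i)ᵀ*P*(S.B i)) *ᵥ (u + ((S.R i + (S.B i)ᵀ*P*(S.B i))⁻¹*((S.B i)ᵀ*P*(S.A i))) *ᵥ x)) :=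
    psd_quad_nonneg hS.posSemidef _
  have hric : S.Ric i P = S.Q i + (S.A i)ᵀ*P*(S.A i)
      - (S.A i)ᵀ*P*(S.B i)*(S.R i + (S.B i)ᵀ*P*(S.B i))⁻¹*((S.B i)ᵀ*P*(S.A i)) := rfl
  rw [hric]
  unfold ell
  linarith [h]

/-- Taking `u = -Kx` in the completion of squares: lower bound by `Q`. -/
lemma ric_ge_Q (hRi : ∀ i, (S.R i).PosDef) {P : Matrix (Fin n) (Fin n) ℝ} (hP : P.PosSemidef)
    (i : Fin M) (x : Fin n → ℝ) :
    x ⬝ᵥ (S.Q i *ᵥ x) ≤ x ⬝ᵥ (S.Ric i P *ᵥ x) := by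
  set u : Fin m → ℝ := -(((S.R i + (S.B i)ᵀ*P*(S.B i))⁻¹*((S.B i)ᵀ*P*(S.A i))) *ᵥ x) with hu
  have h := cos_identity (S.A i) (S.B i) (S.Q i) (S.R i) P hP (hRi i) x u
  have hz : u + ((S.R i + (S.B i)ᵀ*P*(S.B i))⁻¹*((S.B i)ᵀ*P*(S.A i))) *ᵥ x = 0 := by
    rw [hu]; abel
  rw [hz] at h
  simp only [Matrix.mulVec_zero, dotProduct_zero, add_zero] at h
  have h1 : 0 ≤ u ⬝ᵥ (S.R i *ᵥ u) := psd_quad_nonneg (hRi i).posSemidef u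
  have h2 : 0 ≤ (S.A i *ᵥ x + S.B i *ᵥ u) ⬝ᵥ (P *ᵥ (S.A i *ᵥ x + S.B i *ᵥ u)) :=
    psd_quad_nonneg hP _
  have hric : S.Ric i P = S.Q i + (S.A i)ᵀ*P*(S.A i)
      - (S.A i)ᵀ*P*(S.B i)*(S.R i + (S.B i)ᵀ*P*(S.B i))⁻¹*((S.B i)ᵀ*P*(S.A i)) := rfl
  rw [hric]
  linarith [h]

lemma ric_posSemidef (hRi : ∀ i, (S.R i).PosDef) (hQi : ∀ i, (S.Q i).PosDef)
    {P : Matrix (Fin n) (Fin n) ℝ} (hP : P.PosSemidef) (i : Fin M) :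
    (S.Ric i P).PosSemidef := by
  have hPsymm : Pᵀ = P := by
    have := hP.isHermitian
    rwa [IsHermitian, conjTranspose_eq_transpose_of_trivial] at this
  have hS : (S.R i + (S.B i)ᵀ * P * S.B i).PosDef := S_posdef (S.B i) (S.R i) P hP (hRi i)
  have hSsymm : (S.R i + (S.B i)ᵀ * P * S.B i)ᵀ = S.R i + (S.B i)ᵀ * P * S.B i := by
    have := hS.isHermitian
    rwa [IsHermitian, conjTranspose_eq_transpose_of_trivial] at this
  have hQsymm : (S.Q i)ᵀ = S.Q i := by
    have := (hQi i).isHermitian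
    rwa [IsHermitian, conjTranspose_eq_transpose_of_trivial] at this
  refine Matrix.PosSemidef.of_dotProduct_mulVec_nonneg ?_ ?_
  · show (S.Ric i P)ᴴ = S.Ric i P
    rw [conjTranspose_eq_transpose_of_trivial]
    unfold Ric
    simp only [Matrix.transpose_sub, Matrix.transpose_add, Matrix.transpose_mul,
      Matrix.transpose_transpose, Matrix.transpose_nonsing_inv, hPsymm, hSsymm, hQsymm]
    simp [Matrix.mul_assoc]
  · intro x
    rw [star_trivial]
    exact le_trans (psd_quad_nonneg (hQi i).posSemidef x) (S.ric_ge_Q hRi hP i x)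

lemma pseq_posSemidef (hRi : ∀ i, (S.R i).PosDef) (hQi : ∀ i, (S.Q i).PosDef)
    {Pund : Matrix (Fin n) (Fin n) ℝ} (hPund : Pund.PosSemidef) :
    ∀ l : List (Fin M), (S.Pseq Pund l).PosSemidef := by
  intro l
  induction l with
  | nil => exact hPund
  | cons a l ih => exact S.ric_posSemidef hRi hQi ih a

end SwitchedLQR
namespace SwitchedLQR
open Matrix
variable {n m M : ℕ} (S : SwitchedLQR n m M)

def VdSet (Pund : Matrix (Fin n) (Fin n) ℝ) (d : ℕ) (x : Fin n → ℝ) : Set ℝ :=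
  {r : ℝ | ∃ l : List (Fin M), l.length = d ∧ r = x ⬝ᵥ ((S.Pseq Pund l) *ᵥ x)}

lemma vdSet_eq (Pund : Matrix (Fin n) (Fin n) ℝ) (d : ℕ) (x : Fin n → ℝ) :
    S.VdSet Pund d x = (fun l : List (Fin M) => x ⬝ᵥ ((S.Pseq Pund l) *ᵥ x)) ''
      {l : List (Fin M) | l.length = d} := by
  ext r
  constructor
  · rintro ⟨l, hl, rfl⟩; exact ⟨l, hl, rfl⟩
  · rintro ⟨l, hl, rfl⟩; exact ⟨l, hl, rfl⟩

lemma vdSet_finite (Pund : Matrix (Fin n) (Fin n) ℝ) (d : ℕ) (x : Fin n → ℝ) :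
    (S.VdSet Pund d x).Finite := by
  rw [vdSet_eq]
  exact Set.Finite.image _ (List.finite_length_eq _ d)

lemma vdSet_nonempty (hM : 0 < M) (Pund : Matrix (Fin n) (Fin n) ℝ) (d : ℕ) (x : Fin n → ℝ) :
    (S.VdSet Pund d x).Nonempty :=
  ⟨_, List.replicate d ⟨0, hM⟩, List.length_replicate, rfl⟩

lemma vd_eq_sInf (Pund : Matrix (Fin n) (Fin n) ℝ) (d : ℕ) (x : Fin n → ℝ) :
    S.Vd Pund d x = sInf (S.VdSet Pund d x) := rfl

lemma vd_le (Pund : Matrix (Fin n) (Fin n) ℝ) (d : ℕ) (x : Fin n → ℝ)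
    (l : List (Fin M)) (hl : l.length = d) :
    S.Vd Pund d x ≤ x ⬝ᵥ ((S.Pseq Pund l) *ᵥ x) := by
  rw [vd_eq_sInf]
  exact csInf_le (S.vdSet_finite Pund d x).bddBelow ⟨l, hl, rfl⟩

lemma vd_mem (hM : 0 < M) (Pund : Matrix (Fin n) (Fin n) ℝ) (d : ℕ) (x : Fin n → ℝ) :
    ∃ l : List (Fin M), l.length = d ∧ S.Vd Pund d x = x ⬝ᵥ ((S.Pseq Pund l) *ᵥ x) := by
  have := (S.vdSet_nonempty hM Pund d x).csInf_mem (S.vdSet_finite Pund d x)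
  rw [← vd_eq_sInf] at this
  exact this

lemma vd_nonneg (hM : 0 < M) (hRi : ∀ i, (S.R i).PosDef) (hQi : ∀ i, (S.Q i).PosDef)
    {Pund : Matrix (Fin n) (Fin n) ℝ} (hPund : Pund.PosSemidef) (d : ℕ) (x : Fin n → ℝ) :
    0 ≤ S.Vd Pund d x := by
  obtain ⟨l, _, hl⟩ := S.vd_mem hM Pund d x
  rw [hl]
  exact psd_quad_nonneg (S.pseq_posSemidef hRi hQi hPund l) x

lemma phi_shift (x : Fin n → ℝ) (u : ℕ → Fin m → ℝ) (is : ℕ → Fin M) (k : ℕ) :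
    S.phi x u is (k + 1) =
      S.phi (S.A (is 0) *ᵥ x + S.B (is 0) *ᵥ u 0)
        (fun j => u (j + 1)) (fun j => is (j + 1)) k := by
  induction k with
  | zero => rfl
  | succ k ih =>
    show S.A (is (k+1)) *ᵥ (S.phi x u is (k+1)) + S.B (is (k+1)) *ᵥ (u (k+1)) = _
    rw [ih]
    rfl

lemma Jd_shift (Pund : Matrix (Fin n) (Fin n) ℝ) (d : ℕ) (x : Fin n → ℝ)
    (u : ℕ → Fin m → ℝ) (is : ℕ → Fin M) :
    S.Jd Pund (d + 1) x u is = S.ell x (u 0) (is 0) +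
      S.Jd Pund d (S.A (is 0) *ᵥ x + S.B (is 0) *ᵥ u 0)
        (fun j => u (j + 1)) (fun j => is (j + 1)) := by
  unfold Jd
  rw [Finset.sum_range_succ']
  have h1 : ∀ k, S.ell (S.phi x u is (k+1)) (u (k+1)) (is (k+1)) =
      S.ell (S.phi (S.A (is 0) *ᵥ x + S.B (is 0) *ᵥ u 0)
        (fun j => u (j + 1)) (fun j => is (j + 1)) k) (u (k+1)) (is (k+1)) := by
    intro k; rw [S.phi_shift]
  simp only [h1, S.phi_shift x u is d]
  have : S.phi x u is 0 = x := rfl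
  rw [this]
  ring

lemma exists_list_le_Jd (hRi : ∀ i, (S.R i).PosDef) (hQi : ∀ i, (S.Q i).PosDef)
    {Pund : Matrix (Fin n) (Fin n) ℝ} (hPund : Pund.PosSemidef) :
    ∀ (d : ℕ) (x : Fin n → ℝ) (u : ℕ → Fin m → ℝ) (is : ℕ → Fin M),
      ∃ l : List (Fin M), l.length = d ∧
        x ⬝ᵥ ((S.Pseq Pund l) *ᵥ x) ≤ S.Jd Pund d x u is := by
  intro d
  induction d with
  | zero =>
    intro x u is
    exact ⟨[], rfl, by unfold Jd Pseq; simp [phi]⟩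
  | succ d ih =>
    intro x u is
    obtain ⟨l, hl, hle⟩ := ih (S.A (is 0) *ᵥ x + S.B (is 0) *ᵥ u 0)
      (fun j => u (j + 1)) (fun j => is (j + 1))
    refine ⟨is 0 :: l, by simp [hl], ?_⟩
    have h1 : S.Pseq Pund (is 0 :: l) = S.Ric (is 0) (S.Pseq Pund l) := rfl
    rw [h1, S.Jd_shift]
    have h2 := S.ric_key hRi (S.pseq_posSemidef hRi hQi hPund l) (is 0) x (u 0)
    linarith [h2, hle]

lemma vd_le_Jd (hRi : ∀ i, (S.R i).PosDef) (hQi : ∀ i, (S.Q i).PosDef)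
    {Pund : Matrix (Fin n) (Fin n) ℝ} (hPund : Pund.PosSemidef)
    (d : ℕ) (x : Fin n → ℝ) (u : ℕ → Fin m → ℝ) (is : ℕ → Fin M) :
    S.Vd Pund d x ≤ S.Jd Pund d x u is := by
  obtain ⟨l, hl, hle⟩ := S.exists_list_le_Jd hRi hQi hPund d x u is
  exact le_trans (S.vd_le Pund d x l hl) hle

lemma cond1_pointwise {Pund : Matrix (Fin n) (Fin n) ℝ} (hC : S.Cond1 Pund)
    (x : Fin n → ℝ) (u : Fin m → ℝ) (i : Fin M) :
    x ⬝ᵥ (Pund *ᵥ x) ≤ S.ell x u i +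
      (S.A i *ᵥ x + S.B i *ᵥ u) ⬝ᵥ (Pund *ᵥ (S.A i *ᵥ x + S.B i *ᵥ u)) := by
  have h := (hC i).dotProduct_mulVec_nonneg (Sum.elim x u)
  rw [star_trivial] at h
  rw [Matrix.fromBlocks_mulVec, sumElim_dotProduct_sumElim] at h
  simp only [dotProduct_add, Matrix.add_mulVec, Matrix.sub_mulVec, dotProduct_sub,
    Sum.elim_comp_inl, Sum.elim_comp_inr] at h
  rw [expand_quad]
  unfold ell
  linarith [h]

lemma Jd_mono {Pund : Matrix (Fin n) (Fin n) ℝ} (hC : S.Cond1 Pund)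
    (x : Fin n → ℝ) (u : ℕ → Fin m → ℝ) (is : ℕ → Fin M) :
    ∀ d N, d ≤ N → S.Jd Pund d x u is ≤ S.Jd Pund N x u is := by
  intro d N hdN
  induction N with
  | zero => simp_all
  | succ N ih =>
    rcases Nat.lt_or_ge d (N+1) with h | h
    · have hd : d ≤ N := Nat.lt_succ_iff.1 h
      refine le_trans (ih hd) ?_
      unfold Jd
      rw [Finset.sum_range_succ]
      have hk := S.cond1_pointwise hC (S.phi x u is N) (u N) (is N)
      have hphi : S.phi x u is (N+1) = S.A (is N) *ᵥ (S.phi x u is N) + S.B (is N) *ᵥ (u N) := rfl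
      rw [hphi]
      linarith [hk]
    · have : d = N + 1 := le_antisymm hdN h
      rw [this]

end SwitchedLQR
section coercive
open Matrix

lemma quad_continuous {n : ℕ} (P : Matrix (Fin n) (Fin n) ℝ) :
    Continuous fun y : Fin n → ℝ => y ⬝ᵥ (P *ᵥ y) := by
  simp only [dotProduct, Matrix.mulVec, dotProduct]
  exact continuous_finset_sum _ fun i _ =>
    (continuous_apply i).mul (continuous_finset_sum _ fun j _ =>
      (continuous_const.mul (continuous_apply j)))

lemma quad_smul {n : ℕ} (P : Matrix (Fin n) (Fin n) ℝ) (c : ℝ) (y : Fin n → ℝ) :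
    (c • y) ⬝ᵥ (P *ᵥ (c • y)) = c ^ 2 * (y ⬝ᵥ (P *ᵥ y)) := by
  rw [Matrix.mulVec_smul, dotProduct_smul, smul_dotProduct]
  simp [smul_eq_mul]; ring

lemma quad_coercive {n : ℕ} (hn : 0 < n) (Q : Matrix (Fin n) (Fin n) ℝ) (hQ : Q.PosDef)
    (P : Matrix (Fin n) (Fin n) ℝ) (hP : P.PosSemidef) :
    ∃ C : ℝ, 0 ≤ C ∧ ∀ y : Fin n → ℝ, y ⬝ᵥ (P *ᵥ y) ≤ C * (y ⬝ᵥ (Q *ᵥ y)) := by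
  haveI : Nonempty (Fin n) := ⟨⟨0, hn⟩⟩
  set sph : Set (Fin n → ℝ) := Metric.sphere (0 : Fin n → ℝ) 1 with hsph
  have hcomp : IsCompact sph := isCompact_sphere _ _
  have hne : sph.Nonempty := NormedSpace.sphere_nonempty.2 zero_le_one
  obtain ⟨yc, hycm, hyc⟩ := hcomp.exists_isMinOn hne (quad_continuous Q).continuousOn
  obtain ⟨yb, hybm, hyb⟩ := hcomp.exists_isMaxOn hne (quad_continuous P).continuousOn
  set c : ℝ := yc ⬝ᵥ (Q *ᵥ yc) with hc
  set b : ℝ := yb ⬝ᵥ (P *ᵥ yb) with hb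
  have hyc0 : yc ≠ 0 := by
    intro h
    have : ‖yc‖ = 1 := mem_sphere_zero_iff_norm.1 hycm
    rw [h] at this; simp at this
  have hcpos : 0 < c := hQ.dotProduct_mulVec_pos hyc0 |>.trans_eq (by rw [star_trivial])
  have hbnn : 0 ≤ b := psd_quad_nonneg hP yb
  refine ⟨b / c, div_nonneg hbnn hcpos.le, fun y => ?_⟩
  rcases eq_or_ne y 0 with rfl | hy
  · simp
  · have hny : 0 < ‖y‖ := norm_pos_iff.2 hy
    set z : Fin n → ℝ := ‖y‖⁻¹ • y with hz
    have hzm : z ∈ sph := by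
      rw [hsph, mem_sphere_zero_iff_norm, hz, norm_smul]
      simp [abs_of_nonneg (inv_nonneg.2 hny.le), inv_mul_cancel₀ hny.ne']
    have hy_eq : y = ‖y‖ • z := by
      rw [hz, smul_smul, mul_inv_cancel₀ hny.ne', one_smul]
    have hfz : c ≤ z ⬝ᵥ (Q *ᵥ z) := hyc hzm
    have hgz : z ⬝ᵥ (P *ᵥ z) ≤ b := hyb hzm
    have h1 : y ⬝ᵥ (P *ᵥ y) = ‖y‖ ^ 2 * (z ⬝ᵥ (P *ᵥ z)) := by
      conv_lhs => rw [hy_eq]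
      rw [quad_smul]
    have h2 : y ⬝ᵥ (Q *ᵥ y) = ‖y‖ ^ 2 * (z ⬝ᵥ (Q *ᵥ z)) := by
      conv_lhs => rw [hy_eq]
      rw [quad_smul]
    rw [h1, h2, div_mul_eq_mul_div, le_div_iff₀ hcpos]
    have hsq : (0:ℝ) < ‖y‖ ^ 2 := by positivity
    calc ‖y‖ ^ 2 * (z ⬝ᵥ (P *ᵥ z)) * c ≤ ‖y‖ ^ 2 * b * c :=
          mul_le_mul_of_nonneg_right (mul_le_mul_of_nonneg_left hgz hsq.le) hcpos.le
    _ ≤ b * (‖y‖ ^ 2 * (z ⬝ᵥ (Q *ᵥ z))) := by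
          nlinarith [mul_le_mul_of_nonneg_left hfz (mul_nonneg hbnn hsq.le)]

end coercive
namespace SwitchedLQR
open Matrix Filter
variable {n m M : ℕ} (S : SwitchedLQR n m M)

lemma ell_nonneg (hQ : ∀ i, (S.Q i).PosDef) (hR : ∀ i, (S.R i).PosDef)
    (x : Fin n → ℝ) (u : Fin m → ℝ) (i : Fin M) : 0 ≤ S.ell x u i :=
  add_nonneg (psd_quad_nonneg (hQ i).posSemidef x) (psd_quad_nonneg (hR i).posSemidef u)

lemma vd_le_pbar (hn : 0 < n)
    (hQ : ∀ i, (S.Q i).PosDef) (hR : ∀ i, (S.R i).PosDef)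
    {Pund : Matrix (Fin n) (Fin n) ℝ} (hPund : Pund.PosSemidef) (hC : S.Cond1 Pund)
    {Pbar : Matrix (Fin n) (Fin n) ℝ} (hSA : S.SA1 Pbar)
    (d : ℕ) (x : Fin n → ℝ) :
    S.Vd Pund d x ≤ x ⬝ᵥ (Pbar *ᵥ x) := by
  obtain ⟨u, is, hJV, hVle⟩ := (hSA.2) x
  set r : ℝ := x ⬝ᵥ (Pbar *ᵥ x) with hrdef
  have hr : 0 ≤ r := psd_quad_nonneg hSA.1.posSemidef x
  have hJle : S.Jinf x u is ≤ ENNReal.ofReal r := by rw [hJV]; exact hVle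
  have hJtop : S.Jinf x u is ≠ ⊤ := (lt_of_le_of_lt hJle ENNReal.ofReal_lt_top).ne
  set L : ℕ → ℝ := fun k => S.ell (S.phi x u is k) (u k) (is k) with hLdef
  have hLnn : ∀ k, 0 ≤ L k := fun k => S.ell_nonneg hQ hR _ _ _
  have hJeq : S.Jinf x u is = ∑' k, ENNReal.ofReal (L k) := rfl
  have hsum_le : ∀ N, ∑ k ∈ Finset.range N, L k ≤ r := by
    intro N
    have h1 : ENNReal.ofReal (∑ k ∈ Finset.range N, L k)
        = ∑ k ∈ Finset.range N, ENNReal.ofReal (L k) :=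
      ENNReal.ofReal_sum_of_nonneg (fun i _ => hLnn i)
    have h2 : (∑ k ∈ Finset.range N, ENNReal.ofReal (L k)) ≤ S.Jinf x u is := by
      rw [hJeq]; exact ENNReal.sum_le_tsum _
    exact (ENNReal.ofReal_le_ofReal_iff hr).1 (le_trans (h1 ▸ h2) hJle)
  have hsummable : Summable L := by
    have h := ENNReal.summable_toReal (f := fun k => ENNReal.ofReal (L k)) (by rw [← hJeq]; exact hJtop)
    have : (fun k => (ENNReal.ofReal (L k)).toReal) = L := by
      funext k; exact ENNReal.toReal_ofReal (hLnn k)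
    rwa [this] at h
  have hL0 : Tendsto L atTop (nhds 0) := hsummable.tendsto_atTop_zero
  set q : ℕ → ℝ := fun k => (S.phi x u is k) ⬝ᵥ (S.Q (is k) *ᵥ (S.phi x u is k)) with hqdef
  have hqnn : ∀ k, 0 ≤ q k := fun k => psd_quad_nonneg (hQ (is k)).posSemidef _
  have hqL : ∀ k, q k ≤ L k := by
    intro k
    have := psd_quad_nonneg (hR (is k)).posSemidef (u k)
    simp only [hLdef, hqdef, ell]
    linarith
  have hq0 : Tendsto q atTop (nhds 0) :=
    tendsto_of_tendsto_of_tendsto_of_le_of_le tendsto_const_nhds hL0 hqnn hqL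
  choose C hC0 hCle using fun i => quad_coercive hn (S.Q i) (hQ i) Pund hPund
  set C0 : ℝ := ∑ i, C i with hC0def
  have hCi_le : ∀ i, C i ≤ C0 := fun i =>
    Finset.single_le_sum (fun j _ => hC0 j) (Finset.mem_univ i)
  have hC0nn : 0 ≤ C0 := Finset.sum_nonneg (fun j _ => hC0 j)
  set T : ℕ → ℝ := fun k => (S.phi x u is k) ⬝ᵥ (Pund *ᵥ (S.phi x u is k)) with hTdef
  have hTnn : ∀ k, 0 ≤ T k := fun k => psd_quad_nonneg hPund _
  have hT_le : ∀ k, T k ≤ C0 * q k := by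
    intro k
    refine le_trans (hCle (is k) (S.phi x u is k)) ?_
    exact mul_le_mul_of_nonneg_right (hCi_le (is k)) (hqnn k)
  have hT0 : Tendsto T atTop (nhds 0) := by
    have h1 : Tendsto (fun k => C0 * q k) atTop (nhds 0) := by
      have := hq0.const_mul C0
      simpa using this
    exact tendsto_of_tendsto_of_tendsto_of_le_of_le tendsto_const_nhds h1 hTnn hT_le
  have key : ∀ N, d ≤ N → S.Vd Pund d x ≤ r + T N := by
    intro N hdN
    have h1 : S.Vd Pund d x ≤ S.Jd Pund d x u is := S.vd_le_Jd hR hQ hPund d x u is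
    have h2 : S.Jd Pund d x u is ≤ S.Jd Pund N x u is := S.Jd_mono hC x u is d N hdN
    have h3 : S.Jd Pund N x u is = (∑ k ∈ Finset.range N, L k) + T N := rfl
    have h4 := hsum_le N
    linarith
  have hlim : Tendsto (fun N => r + T N) atTop (nhds r) := by
    simpa using tendsto_const_nhds.add hT0
  exact ge_of_tendsto hlim (eventually_atTop.2 ⟨d, fun N hN => key N hN⟩)

end SwitchedLQR
/-- terminal error bound along a finite-horizon optimal trajectory,
eq. (25): under Condition 1 and SA1, with `α,α₀` as in eq. (8), along a
trajectory generated by `(u_k,i_k) ∈ H*_{d-k}(x_k)` for `k = 0,…,d-2`,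
`min_i x_{d-1}ᵀQᵢx_{d-1} ≤ (1-α)^{d-1}·V*_d(x)` and
`V*(x_{d-1}) - x_{d-1}ᵀP̲x_{d-1} ≤ ((1-α)^{d-1}/α₀)·V*_d(x)`. -/
theorem stmt13 {n m M : ℕ} (hn : 0 < n) (hm : 0 < m) (hM : 0 < M)
    (S : SwitchedLQR n m M)
    (hQ : ∀ i : Fin M, (S.Q i).PosDef) (hR : ∀ i : Fin M, (S.R i).PosDef)
    (Pund : Matrix (Fin n) (Fin n) ℝ) (hPund : Pund.PosSemidef)
    (hC : S.Cond1 Pund)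
    (Pbar : Matrix (Fin n) (Fin n) ℝ) (hSA : S.SA1 Pbar)
    (α : ℝ) (hα0 : 0 < α) (hα1 : α < 1)
    (hαQ : ∀ i : Fin M, (S.Q i - α • Pbar).PosSemidef)
    (α₀ : ℝ) (hα₀ : 0 < α₀)
    (hα₀Q : ∀ i : Fin M, (S.Q i - α₀ • (Pbar - Pund)).PosSemidef)
    (d : ℕ) (hd : 1 ≤ d) (x : Fin n → ℝ)
    (xs : ℕ → Fin n → ℝ) (us : ℕ → Fin m → ℝ) (iss : ℕ → Fin M)
    (hx0 : xs 0 = x)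
    (hstep : ∀ k : ℕ, k + 2 ≤ d →
      (us k, iss k) ∈ S.HStar Pund (d - k) (xs k) ∧
      xs (k + 1) = S.A (iss k) *ᵥ (xs k) + S.B (iss k) *ᵥ (us k)) :
    (⨅ i : Fin M, (xs (d - 1)) ⬝ᵥ ((S.Q i) *ᵥ (xs (d - 1)))) ≤
        (1 - α) ^ (d - 1) * S.Vd Pund d x ∧
    (S.Vstar (xs (d - 1))).toReal - (xs (d - 1)) ⬝ᵥ (Pund *ᵥ (xs (d - 1))) ≤
        (1 - α) ^ (d - 1) / α₀ * S.Vd Pund d x := by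
  haveI : Nonempty (Fin M) := ⟨⟨0, hM⟩⟩
  have hquadQ : ∀ (i : Fin M) (y : Fin n → ℝ),
      α * (y ⬝ᵥ (Pbar *ᵥ y)) ≤ y ⬝ᵥ (S.Q i *ᵥ y) := by
    intro i y
    have h := psd_quad_nonneg (hαQ i) y
    simp only [Matrix.sub_mulVec, dotProduct_sub, Matrix.smul_mulVec,
      dotProduct_smul, smul_eq_mul] at h
    linarith
  have hquadQ0 : ∀ (i : Fin M) (y : Fin n → ℝ),
      α₀ * (y ⬝ᵥ (Pbar *ᵥ y) - y ⬝ᵥ (Pund *ᵥ y)) ≤ y ⬝ᵥ (S.Q i *ᵥ y) := by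
    intro i y
    have h := psd_quad_nonneg (hα₀Q i) y
    simp only [Matrix.sub_mulVec, dotProduct_sub, Matrix.smul_mulVec,
      dotProduct_smul, smul_eq_mul] at h
    linarith [mul_sub α₀ (y ⬝ᵥ (Pbar *ᵥ y)) (y ⬝ᵥ (Pund *ᵥ y))]
  have claim : ∀ k, k + 1 ≤ d →
      S.Vd Pund (d - k) (xs k) ≤ (1 - α) ^ k * S.Vd Pund d x := by
    intro k
    induction k with
    | zero => intro _; simp [hx0]
    | succ k ih =>
      intro hk1
      have hk : k + 1 ≤ d := by omega
      have ihk := ih hk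
      obtain ⟨hmem, hxs⟩ := hstep k (by omega)
      have heq : S.Vd Pund (d - k) (xs k) = S.ell (xs k) (us k) (iss k) +
          S.Vd Pund ((d - k) - 1) (S.A (iss k) *ᵥ xs k + S.B (iss k) *ᵥ us k) := hmem
      rw [← hxs] at heq
      have hsub : (d - k) - 1 = d - (k + 1) := by omega
      rw [hsub] at heq
      have h1 : α * S.Vd Pund (d - k) (xs k) ≤ S.ell (xs k) (us k) (iss k) := by
        have ha := hquadQ (iss k) (xs k)
        have hb : S.Vd Pund (d - k) (xs k) ≤ (xs k) ⬝ᵥ (Pbar *ᵥ xs k) :=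
          S.vd_le_pbar hn hQ hR hPund hC hSA _ _
        have hc : 0 ≤ (us k) ⬝ᵥ (S.R (iss k) *ᵥ us k) :=
          psd_quad_nonneg (hR (iss k)).posSemidef _
        have hd' := mul_le_mul_of_nonneg_left hb hα0.le
        unfold SwitchedLQR.ell
        linarith
      have h2 : S.Vd Pund (d - (k + 1)) (xs (k + 1)) ≤
          (1 - α) * S.Vd Pund (d - k) (xs k) := by linarith
      calc S.Vd Pund (d - (k + 1)) (xs (k + 1))
          ≤ (1 - α) * S.Vd Pund (d - k) (xs k) := h2
        _ ≤ (1 - α) * ((1 - α) ^ k * S.Vd Pund d x) :=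
            mul_le_mul_of_nonneg_left ihk (by linarith)
        _ = (1 - α) ^ (k + 1) * S.Vd Pund d x := by ring
  have hclaim := claim (d - 1) (by omega)
  have hdd : d - (d - 1) = 1 := by omega
  rw [hdd] at hclaim
  obtain ⟨l, hl1, hVd1⟩ := S.vd_mem hM Pund 1 (xs (d - 1))
  obtain ⟨i0, rfl⟩ := List.length_eq_one_iff.1 hl1
  have hPseq : S.Pseq Pund [i0] = S.Ric i0 Pund := rfl
  have h2 : (xs (d - 1)) ⬝ᵥ (S.Q i0 *ᵥ xs (d - 1)) ≤ S.Vd Pund 1 (xs (d - 1)) := by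
    rw [hVd1, hPseq]
    exact S.ric_ge_Q hR hPund i0 _
  have hinf_le : (⨅ i : Fin M, (xs (d - 1)) ⬝ᵥ (S.Q i *ᵥ xs (d - 1))) ≤
      (xs (d - 1)) ⬝ᵥ (S.Q i0 *ᵥ xs (d - 1)) :=
    ciInf_le (Set.finite_range _).bddBelow i0
  have part1 : (⨅ i : Fin M, (xs (d - 1)) ⬝ᵥ (S.Q i *ᵥ xs (d - 1))) ≤
      (1 - α) ^ (d - 1) * S.Vd Pund d x := le_trans (le_trans hinf_le h2) hclaim
  refine ⟨part1, ?_⟩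
  set y : Fin n → ℝ := xs (d - 1) with hy
  have hVy : (S.Vstar y).toReal ≤ y ⬝ᵥ (Pbar *ᵥ y) := by
    obtain ⟨u', is', _, hle⟩ := hSA.2 y
    have h := ENNReal.toReal_mono ENNReal.ofReal_ne_top hle
    rwa [ENNReal.toReal_ofReal (psd_quad_nonneg hSA.1.posSemidef y)] at h
  have hlow : α₀ * (y ⬝ᵥ (Pbar *ᵥ y) - y ⬝ᵥ (Pund *ᵥ y)) ≤
      ⨅ i : Fin M, y ⬝ᵥ (S.Q i *ᵥ y) := le_ciInf (fun i => hquadQ0 i y)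
  have hα₀le : α₀ * (y ⬝ᵥ (Pbar *ᵥ y) - y ⬝ᵥ (Pund *ᵥ y)) ≤
      (1 - α) ^ (d - 1) * S.Vd Pund d x := le_trans hlow part1
  have hdiv : y ⬝ᵥ (Pbar *ᵥ y) - y ⬝ᵥ (Pund *ᵥ y) ≤
      ((1 - α) ^ (d - 1) * S.Vd Pund d x) / α₀ := by
    rw [le_div_iff₀ hα₀]
    linarith
  rw [div_mul_eq_mul_div]
  linarith
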